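/- Let A be a finite non-associative relation algebra. A has a qualitative representation if and only if there exists a consistent atomic network (N,λ) over A such that for every consistent triple of atoms (a,b,c) (meaning a;b ≥ c) there are nodes x,y,z ∈ N with λ(x,y)=a, λ(y,z)=b, λ(x,z)=c. -/

import Mathlib

/-- A non-associative relation algebra: a boolean algebra with normal additive
involuted-monoid operators satisfying the Peircean law. -/
class NAAlg (α : Type*) extends BooleanAlgebra α where
  comp : α → α → α
  conv : α → α
  ident : α
  comp_ident : ∀ x : α, comp x ident = x
  ident_comp : ∀ x : α, comp ident x = x
  conv_conv : ∀ x : α, conv (conv x) = x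
  conv_comp : ∀ x y : α, conv (comp x y) = comp (conv y) (conv x)
  conv_bot : conv ⊥ = ⊥
  comp_bot : ∀ x : α, comp x ⊥ = ⊥
  conv_sup : ∀ x y : α, conv (x ⊔ y) = conv x ⊔ conv y
  comp_sup : ∀ x y z : α, comp x (y ⊔ z) = comp x y ⊔ comp x z
  peirce : ∀ x y z : α, comp x y ⊓ conv z = ⊥ ↔ comp y z ⊓ conv x = ⊥

/-- Composition of binary relations. -/
def rcomp {D : Type*} (r s : Set (D × D)) : Set (D × D) :=
  {p | ∃ z, (p.1, z) ∈ r ∧ (z, p.2) ∈ s}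

/-- A qualitative representation of a non-associative relation algebra. -/
structure IsQualRep {α D : Type*} [NAAlg α] (φ : α → Set (D × D)) : Prop where
  map_bot : φ ⊥ = ∅
  map_top : φ ⊤ = Set.univ
  map_sup : ∀ a b : α, φ (a ⊔ b) = φ a ∪ φ b
  map_compl : ∀ a : α, φ aᶜ = Set.univ \ φ a
  map_ident : φ NAAlg.ident = {p : D × D | p.1 = p.2}
  map_conv : ∀ a : α, φ (NAAlg.conv a) = {p : D × D | (p.2, p.1) ∈ φ a}
  qual : ∀ a b c : α, rcomp (φ a) (φ b) ⊆ φ c ↔ NAAlg.comp a b ≤ c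

set_option linter.unusedSectionVars false

namespace NAAlg
variable {α : Type*} [NAAlg α]

lemma conv_mono {x y : α} (h : x ≤ y) : conv x ≤ conv y := by
  have hs := conv_sup x y
  rw [sup_eq_right.2 h] at hs
  rw [hs]; exact le_sup_left

lemma conv_le_conv_iff {x y : α} : conv x ≤ conv y ↔ x ≤ y := by
  constructor
  · intro h; have := conv_mono (α := α) h; rwa [conv_conv, conv_conv] at this
  · exact conv_mono

lemma conv_inj : Function.Injective (conv (α := α)) := by
  intro x y h
  exact le_antisymm (conv_le_conv_iff.1 h.le) (conv_le_conv_iff.1 h.ge)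

lemma conv_atom {a : α} (h : IsAtom a) : IsAtom (conv a) := by
  constructor
  · intro hc; apply h.1; apply conv_inj; rw [hc, conv_bot]
  · intro b hb
    have h2 : conv b ≤ a := by
      have := conv_mono hb.le; rwa [conv_conv] at this
    rcases (h.le_iff.1 h2) with h3 | h3
    · have : b = ⊥ := by
        have := congrArg NAAlg.conv h3
        rwa [conv_conv, conv_bot] at this
      exact this
    · exfalso; apply hb.ne; apply conv_inj; rw [conv_conv, h3]

lemma comp_mono_right {x y z : α} (h : y ≤ z) : comp x y ≤ comp x z := by
  have := comp_sup x y z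
  rw [sup_eq_right.2 h] at this
  rw [this]; exact le_sup_left

lemma comp_sup_left (x y z : α) : comp (x ⊔ y) z = comp x z ⊔ comp y z := by
  have h1 : comp (x ⊔ y) z = conv (comp (conv z) (conv (x ⊔ y))) := by
    rw [conv_comp, conv_conv, conv_conv]
  rw [h1, conv_sup, comp_sup, conv_sup, conv_comp, conv_comp, conv_conv, conv_conv, conv_conv]

lemma comp_mono_left {x y z : α} (h : x ≤ y) : comp x z ≤ comp y z := by
  have := comp_sup_left x y z
  rw [sup_eq_right.2 h] at this
  rw [this]; exact le_sup_left

lemma comp_mono {x y x' y' : α} (h : x ≤ x') (h' : y ≤ y') : comp x y ≤ comp x' y' :=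
  (comp_mono_left h).trans (comp_mono_right h')

lemma bot_comp (x : α) : comp ⊥ x = ⊥ := by
  have : comp ⊥ x = conv (comp (conv x) ⊥) := by rw [conv_comp, conv_conv, conv_bot]
  rw [this, comp_bot, conv_bot]

lemma conv_ident : conv (ident : α) = ident := by
  have h : ∀ y : α, comp (conv ident) y = y := by
    intro y
    have := conv_comp (conv y) (ident : α)
    rw [comp_ident, conv_conv] at this
    exact this.symm
  have := h (ident : α)
  rw [comp_ident] at this
  exact this

end NAAlg

-- atom lemmas
section Atoms
variable {α : Type*} [BooleanAlgebra α]

lemma atom_le_iff_inf_ne_bot {a x : α} (h : IsAtom a) : a ≤ x ↔ a ⊓ x ≠ ⊥ := by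
  constructor
  · intro hle hbot; rw [inf_eq_left.2 hle] at hbot; exact h.1 hbot
  · intro hne
    rcases h.le_iff.1 (inf_le_left : a ⊓ x ≤ a) with h2 | h2
    · exact absurd h2 hne
    · exact h2 ▸ inf_le_right

lemma atom_le_compl_iff {a x : α} (h : IsAtom a) : a ≤ xᶜ ↔ ¬ a ≤ x := by
  constructor
  · intro h1 h2
    exact h.1 (le_bot_iff.1 (le_inf h2 h1 |>.trans (le_of_eq inf_compl_eq_bot)))
  · intro h1
    rw [atom_le_iff_inf_ne_bot h] at h1
    push_neg at h1
    rwa [← disjoint_iff, ← le_compl_iff_disjoint_right] at h1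

lemma atom_le_sup_iff {a x y : α} (h : IsAtom a) : a ≤ x ⊔ y ↔ a ≤ x ∨ a ≤ y := by
  constructor
  · intro h1
    by_contra hc
    push_neg at hc
    have hx := (atom_le_compl_iff h).2 hc.1
    have hy := (atom_le_compl_iff h).2 hc.2
    have : a ≤ (x ⊔ y)ᶜ := by rw [compl_sup]; exact le_inf hx hy
    exact h.1 (le_bot_iff.1 ((le_inf h1 this).trans (le_of_eq inf_compl_eq_bot)))
  · rintro (h1 | h1)
    · exact h1.trans le_sup_left
    · exact h1.trans le_sup_right

lemma atom_eq_of_inf_ne_bot {a b : α} (ha : IsAtom a) (hb : IsAtom b) (h : a ⊓ b ≠ ⊥) :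
    a = b := by
  have h1 : a ≤ b := (atom_le_iff_inf_ne_bot ha).2 h
  exact (hb.le_iff.1 h1).resolve_left ha.1

end Atoms
section FinBA
variable {α : Type*} [NAAlg α] [Fintype α]
open NAAlg

lemma exists_atom_le_of_ne_bot {a : α} (h : a ≠ ⊥) : ∃ t, IsAtom t ∧ t ≤ a :=
  ((eq_bot_or_exists_atom_le a).resolve_left h)

lemma le_of_atoms_le {a s : α} (h : ∀ t, IsAtom t → t ≤ a → t ≤ s) : a ≤ s := by
  by_contra hc
  have hne : a ⊓ sᶜ ≠ ⊥ := by
    intro hb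
    exact hc (sdiff_eq_bot_iff.1 (by rwa [sdiff_eq]))
  obtain ⟨t, ht, hta⟩ := exists_atom_le_of_ne_bot hne
  have h1 := h t ht (hta.trans inf_le_left)
  have h2 : t ≤ sᶜ := hta.trans inf_le_right
  exact ht.1 (le_bot_iff.1 ((le_inf h1 h2).trans (le_of_eq inf_compl_eq_bot)))

lemma eq_sup_atoms (a : α) :
    ∃ s : Finset α, (∀ t ∈ s, IsAtom t ∧ t ≤ a) ∧ a = s.sup id := by
  classical
  refine ⟨Finset.univ.filter (fun t => IsAtom t ∧ t ≤ a), by simp, ?_⟩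
  apply le_antisymm
  · apply le_of_atoms_le
    intro t ht hta
    exact Finset.le_sup (f := id) (by simp [ht, hta])
  · apply Finset.sup_le
    intro t ht
    simp only [Finset.mem_filter] at ht
    exact ht.2.2

lemma comp_right_finsetSup (x : α) (s : Finset α) :
    comp x (s.sup id) = s.sup (fun t => comp x t) := by
  classical
  induction s using Finset.induction with
  | empty => simp [comp_bot]
  | insert _ _ h ih => rw [Finset.sup_insert, comp_sup, ih, Finset.sup_insert]; rfl

lemma comp_left_finsetSup (x : α) (s : Finset α) :
    comp (s.sup id) x = s.sup (fun t => comp t x) := by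
  classical
  induction s using Finset.induction with
  | empty => simp [bot_comp]
  | insert _ _ h ih => rw [Finset.sup_insert, comp_sup_left, ih, Finset.sup_insert]; rfl

lemma comp_le_of_atoms {a b c : α}
    (h : ∀ a' b', IsAtom a' → a' ≤ a → IsAtom b' → b' ≤ b → comp a' b' ≤ c) :
    comp a b ≤ c := by
  obtain ⟨s, hs, hsa⟩ := eq_sup_atoms a
  obtain ⟨t, ht, htb⟩ := eq_sup_atoms b
  rw [hsa, htb, comp_left_finsetSup]
  apply Finset.sup_le
  intro u hu
  rw [comp_right_finsetSup]
  apply Finset.sup_le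
  intro v hv
  exact h u v (hs u hu).1 (hs u hu).2 (ht v hv).1 (ht v hv).2

/-- there exist atoms a' ≤ a, b' ≤ b with comp a' b' not ≤ c, when comp a b not ≤ c -/
lemma exists_atoms_comp_not_le {a b c : α} (h : ¬ comp a b ≤ c) :
    ∃ a' b' c', IsAtom a' ∧ a' ≤ a ∧ IsAtom b' ∧ b' ≤ b ∧ IsAtom c' ∧
      c' ≤ comp a' b' ∧ ¬ c' ≤ c := by
  by_contra hc
  push_neg at hc
  apply h
  apply comp_le_of_atoms
  intro a' b' ha' haa hb' hbb
  apply le_of_atoms_le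
  intro c' hc' hcle
  by_contra hcc
  exact hcc (hc a' b' c' ha' haa hb' hbb hc' hcle)
section Rep
open NAAlg
variable {α D : Type*} [NAAlg α] [Fintype α] {φ : α → Set (D × D)}

lemma rep_mono (hrep : IsQualRep φ) {a b : α} (h : a ≤ b) : φ a ⊆ φ b := by
  have : φ b = φ a ∪ φ b := by rw [← hrep.map_sup, sup_eq_right.2 h]
  rw [this]; exact Set.subset_union_left

lemma rep_inf (hrep : IsQualRep φ) (a b : α) : φ (a ⊓ b) = φ a ∩ φ b := by
  have h1 : a ⊓ b = (aᶜ ⊔ bᶜ)ᶜ := by rw [compl_sup, compl_compl, compl_compl]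
  rw [h1, hrep.map_compl, hrep.map_sup, hrep.map_compl, hrep.map_compl]
  ext p
  simp only [Set.mem_diff, Set.mem_univ, Set.mem_union, true_and, Set.mem_inter_iff]
  tauto

open scoped Classical in
noncomputable def atomOf (φ : α → Set (D × D)) (x y : D) : α :=
  (Finset.univ.filter (fun a => (x, y) ∈ φ a)).inf id

lemma mem_atomOf (hrep : IsQualRep φ) (x y : D) : (x, y) ∈ φ (atomOf φ x y) := by
  classical
  unfold atomOf
  have key : ∀ s : Finset α, (∀ a ∈ s, (x, y) ∈ φ a) → (x, y) ∈ φ (s.inf id) := by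
    intro s
    induction s using Finset.induction with
    | empty => intro _; simp only [Finset.inf_empty]; rw [hrep.map_top]; trivial
    | @insert a s ha ih =>
      intro h
      rw [Finset.inf_insert, rep_inf hrep]
      exact ⟨h a (Finset.mem_insert_self a s), ih fun b hb => h b (Finset.mem_insert_of_mem hb)⟩
  apply key
  intro a ha
  exact (Finset.mem_filter.1 ha).2

lemma atomOf_le_iff (hrep : IsQualRep φ) {x y : D} {a : α} :
    atomOf φ x y ≤ a ↔ (x, y) ∈ φ a := by
  classical
  constructor
  · intro h
    exact rep_mono hrep h (mem_atomOf hrep x y)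
  · intro h
    exact Finset.inf_le (by simp [atomOf, h])

lemma atomOf_isAtom (hrep : IsQualRep φ) (x y : D) : IsAtom (atomOf φ x y) := by
  constructor
  · intro hb
    have := mem_atomOf hrep x y
    rw [hb, hrep.map_bot] at this
    exact this
  · intro b hb
    by_cases hmem : (x, y) ∈ φ b
    · exact absurd (le_antisymm ((atomOf_le_iff hrep).2 hmem) hb.le).symm hb.ne
    · have h1 : (x, y) ∈ φ bᶜ := by
        rw [hrep.map_compl]; exact ⟨trivial, hmem⟩
      have h2 : atomOf φ x y ≤ bᶜ := (atomOf_le_iff hrep).2 h1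
      have h3 : b ≤ bᶜ := hb.le.trans h2
      exact le_bot_iff.1 ((le_inf le_rfl h3).trans (le_of_eq inf_compl_eq_bot))

lemma atomOf_eq (hrep : IsQualRep φ) {x y : D} {a : α} (ha : IsAtom a)
    (h : (x, y) ∈ φ a) : atomOf φ x y = a :=
  (ha.le_iff.1 ((atomOf_le_iff hrep).2 h)).resolve_left (atomOf_isAtom hrep x y).1

lemma exists_witness (hrep : IsQualRep φ) {a b c : α} (hc : IsAtom c)
    (hcle : c ≤ comp a b) :
    ∃ x y z : D, (x, y) ∈ φ a ∧ (y, z) ∈ φ b ∧ (x, z) ∈ φ c := by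
  have h1 : ¬ comp a b ≤ cᶜ := by
    intro h
    exact hc.1 (le_bot_iff.1 ((le_inf le_rfl (hcle.trans h)).trans (le_of_eq inf_compl_eq_bot)))
  have h2 : ¬ rcomp (φ a) (φ b) ⊆ φ cᶜ := fun h => h1 ((hrep.qual a b cᶜ).1 h)
  obtain ⟨p, hp, hpc⟩ := Set.not_subset.1 h2
  obtain ⟨m, hm1, hm2⟩ := hp
  refine ⟨p.1, m, p.2, hm1, hm2, ?_⟩
  rw [hrep.map_compl] at hpc
  simp only [Set.mem_diff, Set.mem_univ, true_and, not_not] at hpc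
  exact hpc

lemma atomOf_le_ident (hrep : IsQualRep φ) (x : D) : atomOf φ x x ≤ ident := by
  rw [atomOf_le_iff hrep, hrep.map_ident]
  rfl

lemma atomOf_comp_ne_bot (hrep : IsQualRep φ) (x y z : D) :
    comp (atomOf φ x y) (atomOf φ y z) ⊓ atomOf φ x z ≠ ⊥ := by
  intro hbot
  have h1 : comp (atomOf φ x y) (atomOf φ y z) ≤ (atomOf φ x z)ᶜ :=
    le_compl_iff_disjoint_right.2 (disjoint_iff.2 hbot)
  have h2 : rcomp (φ (atomOf φ x y)) (φ (atomOf φ y z)) ⊆ φ ((atomOf φ x z)ᶜ) :=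
    (hrep.qual _ _ _).2 h1
  have h3 : ((x, z) : D × D) ∈ rcomp (φ (atomOf φ x y)) (φ (atomOf φ y z)) :=
    ⟨y, mem_atomOf hrep x y, mem_atomOf hrep y z⟩
  have h4 := h2 h3
  rw [hrep.map_compl] at h4
  exact h4.2 (mem_atomOf hrep x z)

lemma atomOf_conv_ne_bot (hrep : IsQualRep φ) (x y : D) :
    atomOf φ x y ⊓ conv (atomOf φ y x) ≠ ⊥ := by
  intro hbot
  have h1 : ((x, y) : D × D) ∈ φ (conv (atomOf φ y x)) := by
    rw [hrep.map_conv]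
    exact mem_atomOf hrep y x
  have h2 : ((x, y) : D × D) ∈ φ (atomOf φ x y ⊓ conv (atomOf φ y x)) := by
    rw [rep_inf hrep]
    exact ⟨mem_atomOf hrep x y, h1⟩
  rw [hbot, hrep.map_bot] at h2
  exact h2

end Rep

open NAAlg in
theorem stmt11 {α : Type} [NAAlg α] [Fintype α] :
    (∃ (D : Type) (φ : α → Set (D × D)), Function.Injective φ ∧ IsQualRep φ) ↔
    (∃ (N : Type) (_ : Fintype N) (lam : N → N → α),
      (∀ x : N, lam x x ≤ NAAlg.ident) ∧
      (∀ x y z : N, NAAlg.comp (lam x y) (lam y z) ⊓ lam x z ≠ ⊥) ∧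
      (∀ x y : N, lam x y ⊓ NAAlg.conv (lam y x) ≠ ⊥) ∧
      (∀ x y : N, lam x y ≠ ⊥) ∧
      (∀ x y : N, IsAtom (lam x y)) ∧
      (∀ a b c : α, IsAtom a → IsAtom b → IsAtom c → c ≤ NAAlg.comp a b →
        ∃ x y z : N, lam x y = a ∧ lam y z = b ∧ lam x z = c)) := by
  constructor
  · rintro ⟨D, φ, hinj, hrep⟩
    by_cases hD : Nonempty D
    · have hch : ∀ t : α × α × α, ∃ x y z : D,
          (IsAtom t.2.2 ∧ t.2.2 ≤ comp t.1 t.2.1) →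
          ((x, y) ∈ φ t.1 ∧ (y, z) ∈ φ t.2.1 ∧ (x, z) ∈ φ t.2.2) := by
        intro t
        by_cases hp : IsAtom t.2.2 ∧ t.2.2 ≤ comp t.1 t.2.1
        · obtain ⟨x, y, z, h⟩ := exists_witness hrep hp.1 hp.2
          exact ⟨x, y, z, fun _ => h⟩
        · obtain ⟨d⟩ := hD
          exact ⟨d, d, d, fun h => absurd h hp⟩
      choose xf yf zf hf using hch
      set g : (α × α × α) × Fin 3 → D := fun n => ![xf n.1, yf n.1, zf n.1] n.2 with hg
      refine ⟨(α × α × α) × Fin 3, inferInstance, fun n m => atomOf φ (g n) (g m),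
        fun n => atomOf_le_ident hrep _,
        fun n m k => atomOf_comp_ne_bot hrep _ _ _,
        fun n m => atomOf_conv_ne_bot hrep _ _,
        fun n m => (atomOf_isAtom hrep _ _).1,
        fun n m => atomOf_isAtom hrep _ _, ?_⟩
      intro a b c ha hb hc hcle
      have hspec := hf (a, b, c) ⟨hc, hcle⟩
      refine ⟨((a, b, c), 0), ((a, b, c), 1), ((a, b, c), 2), ?_, ?_, ?_⟩
      · have e1 : g ((a, b, c), 0) = xf (a, b, c) := rfl
        have e2 : g ((a, b, c), 1) = yf (a, b, c) := rfl
        show atomOf φ (g ((a, b, c), 0)) (g ((a, b, c), 1)) = a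
        rw [e1, e2]
        exact atomOf_eq hrep ha hspec.1
      · have e1 : g ((a, b, c), 1) = yf (a, b, c) := rfl
        have e2 : g ((a, b, c), 2) = zf (a, b, c) := rfl
        show atomOf φ (g ((a, b, c), 1)) (g ((a, b, c), 2)) = b
        rw [e1, e2]
        exact atomOf_eq hrep hb hspec.2.1
      · have e1 : g ((a, b, c), 0) = xf (a, b, c) := rfl
        have e2 : g ((a, b, c), 2) = zf (a, b, c) := rfl
        show atomOf φ (g ((a, b, c), 0)) (g ((a, b, c), 2)) = c
        rw [e1, e2]
        exact atomOf_eq hrep hc hspec.2.2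
    · refine ⟨Empty, inferInstance, fun x _ => x.elim, fun x => x.elim,
        fun x => x.elim, fun x => x.elim, fun x => x.elim, fun x => x.elim, ?_⟩
      intro a b c ha hb hc hcle
      exfalso
      obtain ⟨x, -, -, -⟩ := exists_witness hrep hc hcle
      exact hD ⟨x⟩
  · rintro ⟨N, instN, lam, h1, h2, h3, h4, h5, h6⟩
    classical
    have hconv : ∀ x y, lam x y = conv (lam y x) :=
      fun x y => atom_eq_of_inf_ne_bot (h5 x y) (conv_atom (h5 y x)) (h3 x y)
    have hsymm : ∀ {x y}, lam x y ≤ ident → lam y x ≤ ident := by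
      intro x y h
      rw [hconv y x]
      calc conv (lam x y) ≤ conv ident := conv_mono h
        _ = ident := conv_ident
    have htrans : ∀ {x y z}, lam x y ≤ ident → lam y z ≤ ident → lam x z ≤ ident := by
      intro x y z hxy hyz
      have hcle : comp (lam x y) (lam y z) ≤ ident := by
        have := comp_mono hxy hyz; rwa [comp_ident] at this
      have hne : lam x z ⊓ ident ≠ ⊥ := by
        intro hb
        apply h2 x y z
        apply le_bot_iff.1
        calc comp (lam x y) (lam y z) ⊓ lam x z ≤ ident ⊓ lam x z := inf_le_inf_right _ hcle
          _ = lam x z ⊓ ident := inf_comm ..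
          _ = ⊥ := hb
      exact (atom_le_iff_inf_ne_bot (h5 x z)).2 hne
    have hwd : ∀ x x' y y', lam x x' ≤ ident → lam y y' ≤ ident → lam x y = lam x' y' := by
      intro x x' y y' hx hy
      have step1 : lam x y = lam x' y := by
        have hle : comp (lam x x') (lam x' y) ≤ lam x' y := by
          have := comp_mono_left (z := lam x' y) hx; rwa [ident_comp] at this
        have hne : lam x y ⊓ lam x' y ≠ ⊥ := by
          intro hb
          apply h2 x x' y
          apply le_bot_iff.1
          calc comp (lam x x') (lam x' y) ⊓ lam x y ≤ lam x' y ⊓ lam x y :=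
                inf_le_inf_right _ hle
            _ = lam x y ⊓ lam x' y := inf_comm ..
            _ = ⊥ := hb
        exact atom_eq_of_inf_ne_bot (h5 x y) (h5 x' y) hne
      have step2 : lam x' y = lam x' y' := by
        have hle : comp (lam x' y) (lam y y') ≤ lam x' y := by
          have := comp_mono_right (x := lam x' y) hy; rwa [comp_ident] at this
        have hne : lam x' y' ⊓ lam x' y ≠ ⊥ := by
          intro hb
          apply h2 x' y y'
          apply le_bot_iff.1
          calc comp (lam x' y) (lam y y') ⊓ lam x' y' ≤ lam x' y ⊓ lam x' y' :=
                inf_le_inf_right _ hle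
            _ = lam x' y' ⊓ lam x' y := inf_comm ..
            _ = ⊥ := hb
        exact (atom_eq_of_inf_ne_bot (h5 x' y') (h5 x' y) hne).symm
      rw [step1, step2]
    let s : Setoid N := ⟨fun x y => lam x y ≤ ident,
      ⟨fun x => h1 x, fun h => hsymm h, fun hab hbc => htrans hab hbc⟩⟩
    let lq : Quotient s → Quotient s → α :=
      Quotient.lift₂ lam (fun a₁ b₁ a₂ b₂ ha hb => hwd a₁ a₂ b₁ b₂ ha hb)
    have hlq : ∀ x y : N, lq (Quotient.mk s x) (Quotient.mk s y) = lam x y := fun _ _ => rfl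
    have hatomQ : ∀ p q : Quotient s, IsAtom (lq p q) := by
      intro p q
      refine Quotient.inductionOn₂ p q ?_
      intro x y
      exact h5 x y
    have h2Q : ∀ p m q : Quotient s, comp (lq p m) (lq m q) ⊓ lq p q ≠ ⊥ := by
      intro p m q
      refine Quotient.inductionOn₃ p m q ?_
      intro x y z
      exact h2 x y z
    have hconvQ : ∀ p q : Quotient s, lq p q = conv (lq q p) := by
      intro p q
      refine Quotient.inductionOn₂ p q ?_
      intro x y
      exact hconv x y
    have hreal : ∀ a : α, IsAtom a → ∃ x y : N, lam x y = a := by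
      intro a ha
      have hnle : ¬ comp a ident ≤ aᶜ := by
        rw [comp_ident]
        intro h
        exact ha.1 (le_bot_iff.1 ((le_inf le_rfl h).trans (le_of_eq inf_compl_eq_bot)))
      obtain ⟨a', e, c', ha', haa, he, hei, hc', hcle, hcc⟩ := exists_atoms_comp_not_le hnle
      have haeq : a' = a := (ha.le_iff.1 haa).resolve_left ha'.1
      obtain ⟨x, y, z, hxy, -, -⟩ := h6 a' e c' ha' he hc' hcle
      exact ⟨x, y, by rw [hxy, haeq]⟩
    refine ⟨Quotient s, fun a => {p : Quotient s × Quotient s | lq p.1 p.2 ≤ a}, ?_, ?_⟩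
    · intro a b hab
      have key : ∀ u v : α,
          {p : Quotient s × Quotient s | lq p.1 p.2 ≤ u} =
          {p : Quotient s × Quotient s | lq p.1 p.2 ≤ v} → u ≤ v := by
        intro u v huv
        apply le_of_atoms_le
        intro t ht htu
        obtain ⟨x, y, hxy⟩ := hreal t ht
        have hm : (⟨Quotient.mk s x, Quotient.mk s y⟩ : Quotient s × Quotient s) ∈
            {p : Quotient s × Quotient s | lq p.1 p.2 ≤ u} := by
          show lq (Quotient.mk s x) (Quotient.mk s y) ≤ u
          rw [hlq, hxy]; exact htu
        rw [huv] at hm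
        have h2' : lq (Quotient.mk s x) (Quotient.mk s y) ≤ v := hm
        rwa [hlq, hxy] at h2'
      exact le_antisymm (key a b hab) (key b a hab.symm)
    · constructor
      · ext ⟨p, q⟩
        simp only [Set.mem_setOf_eq, Set.mem_empty_iff_false, iff_false, le_bot_iff]
        exact (hatomQ p q).1
      · ext ⟨p, q⟩
        simp only [Set.mem_setOf_eq, Set.mem_univ, iff_true]
        exact le_top
      · intro a b
        ext ⟨p, q⟩
        simp only [Set.mem_setOf_eq, Set.mem_union]
        exact atom_le_sup_iff (hatomQ p q)
      · intro a
        ext ⟨p, q⟩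
        simp only [Set.mem_setOf_eq, Set.mem_diff, Set.mem_univ, true_and]
        exact atom_le_compl_iff (hatomQ p q)
      · ext ⟨p, q⟩
        simp only [Set.mem_setOf_eq]
        refine Quotient.inductionOn₂ p q ?_
        intro x y
        rw [hlq]
        constructor
        · intro h
          exact Quotient.sound h
        · intro h
          exact Quotient.exact h
      · intro a
        ext ⟨p, q⟩
        simp only [Set.mem_setOf_eq]
        rw [hconvQ p q]
        exact conv_le_conv_iff
      · intro a b c
        constructor
        · intro hsub
          by_contra hcn
          obtain ⟨a', b', c', ha', haa, hb', hbb, hc', hcle, hcc⟩ :=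
            exists_atoms_comp_not_le hcn
          obtain ⟨x, y, z, hxy, hyz, hxz⟩ := h6 a' b' c' ha' hb' hc' hcle
          have hmem : (⟨Quotient.mk s x, Quotient.mk s z⟩ : Quotient s × Quotient s) ∈
              rcomp {p : Quotient s × Quotient s | lq p.1 p.2 ≤ a}
                {p : Quotient s × Quotient s | lq p.1 p.2 ≤ b} := by
            refine ⟨Quotient.mk s y, ?_, ?_⟩
            · show lq (Quotient.mk s x) (Quotient.mk s y) ≤ a
              rw [hlq, hxy]; exact haa
            · show lq (Quotient.mk s y) (Quotient.mk s z) ≤ b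
              rw [hlq, hyz]; exact hbb
          have hin := hsub hmem
          have h2' : lq (Quotient.mk s x) (Quotient.mk s z) ≤ c := hin
          rw [hlq, hxz] at h2'
          exact hcc h2'
        · intro hle
          rintro ⟨p, q⟩ ⟨m, hm1, hm2⟩
          have hm1' : lq p m ≤ a := hm1
          have hm2' : lq m q ≤ b := hm2
          show lq p q ≤ c
          have hcc : comp (lq p m) (lq m q) ≤ c := (comp_mono hm1' hm2').trans hle
          have hne : lq p q ⊓ c ≠ ⊥ := by
            intro hb
            apply h2Q p m q
            apply le_bot_iff.1
            calc comp (lq p m) (lq m q) ⊓ lq p q ≤ c ⊓ lq p q := inf_le_inf_right _ hcc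
              _ = lq p q ⊓ c := inf_comm ..
              _ = ⊥ := hb
          exact (atom_le_iff_inf_ne_bot (hatomQ p q)).2 hne
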